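/- Let w : ℝ → ℝ be continuous, let t ≠ 0, and suppose there exists a nonzero compactly supported distribution φ on ℝ such that the solution U(t)φ = F^{-1}[e^{-itw(ξ)} F φ] also has compact support. Let f and g be the entire extensions of e^{-itw}·Fφ and Fφ respectively (given by Paley–Wiener–Schwartz), and let F(z) = f(z)/g(z) be the resulting meromorphic function. Then F has no real poles. -/

import Mathlib

open Filter Topology

/-- If `w : ℝ → ℝ` is continuous, `t ≠ 0`, and `f, g` are the entire extensions of
`e^{-itw}·𝓕φ` and `𝓕φ` (for a nonzero compactly supported distribution `φ` whose
evolution `U(t)φ` also has compact support), given by Paley–Wiener–Schwartz — so that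
`g` is entire and not identically zero, `f` is entire, and `f(ξ) = e^{-itw(ξ)} g(ξ)`
for real `ξ` — then the meromorphic function `F = f/g` has no real poles. -/
theorem no_real_poles
    (w : ℝ → ℝ) (hw : Continuous w) (t : ℝ) (ht : t ≠ 0)
    (f g : ℂ → ℂ) (hf : Differentiable ℂ f) (hg : Differentiable ℂ g)
    (hg0 : ∃ z, g z ≠ 0)
    (hfg : ∀ ξ : ℝ, f ξ = Complex.exp (-Complex.I * t * w ξ) * g ξ) :
    ∀ p : ℝ, ¬ Tendsto (fun z : ℂ => ‖f z / g z‖)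
      (nhdsWithin (p : ℂ) {z : ℂ | g z ≠ 0}) atTop := by
  intro p h
  have hga : AnalyticAt ℂ g (p : ℂ) := hg.analyticAt (p : ℂ)
  rcases hga.eventually_eq_zero_or_eventually_ne_zero with h0 | hne
  · obtain ⟨z, hz⟩ := hg0
    have hOn : AnalyticOnNhd ℂ g Set.univ := fun z _ => hg.analyticAt z
    have hzero : Set.EqOn g 0 Set.univ :=
      hOn.eqOn_zero_of_preconnected_of_eventuallyEq_zero
        isPreconnected_univ (Set.mem_univ (p : ℂ)) h0
    exact hz (hzero (Set.mem_univ z))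
  · -- real points approach p within {g ≠ 0}
    have hcont : Tendsto (fun ξ : ℝ => (ξ : ℂ)) (𝓝[≠] p) (𝓝[≠] (p : ℂ)) := by
      apply tendsto_nhdsWithin_of_tendsto_nhds_of_eventually_within
      · exact (Complex.continuous_ofReal.tendsto p).mono_left nhdsWithin_le_nhds
      · filter_upwards [self_mem_nhdsWithin] with ξ hξ
        simpa [Complex.ofReal_inj] using hξ
    have hne' : ∀ᶠ ξ : ℝ in 𝓝[≠] p, g ξ ≠ 0 := hcont.eventually hne
    have htend : Tendsto (fun ξ : ℝ => (ξ : ℂ)) (𝓝[≠] p)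
        (nhdsWithin (p : ℂ) {z : ℂ | g z ≠ 0}) := by
      apply tendsto_nhdsWithin_of_tendsto_nhds_of_eventually_within
      · exact (Complex.continuous_ofReal.tendsto p).mono_left nhdsWithin_le_nhds
      · exact hne'
    have h2 : ∀ᶠ ξ : ℝ in 𝓝[≠] p, 2 ≤ ‖f ξ / g ξ‖ :=
      htend.eventually (h.eventually_ge_atTop 2)
    have : ∀ᶠ ξ : ℝ in 𝓝[≠] p, False := by
      filter_upwards [hne', h2] with ξ hgξ h2ξ
      have habs : ‖f ξ / g ξ‖ = 1 := by
        rw [hfg ξ, mul_div_assoc, div_self hgξ, mul_one, Complex.norm_exp]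
        have : (-Complex.I * t * w ξ).re = 0 := by simp
        rw [this, Real.exp_zero]
      rw [habs] at h2ξ; linarith
    obtain ⟨_, hF⟩ := this.exists
    exact hF
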